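/- Let n and e be positive integers with 13 ≤ e ≤ n(n−1)/2. Then there exists a simple graph G with n vertices and e edges such that the number of 4-edge paths in G is at least (1/2)·(√(2e) − 5)⁵. -/

import Mathlib

def QG (n a b : ℕ) : SimpleGraph (Fin n) where
  Adj x y := x ≠ y ∧ ((x.val < a ∧ y.val < a) ∨ (x.val = a ∧ y.val < b) ∨ (y.val = a ∧ x.val < b))
  symm := ⟨by rintro x y ⟨h1, h2⟩; exact ⟨h1.symm, by tauto⟩⟩
  loopless := ⟨fun x h => h.1 rfl⟩

instance QG.decRel (n a b : ℕ) : DecidableRel (QG n a b).Adj := fun x y =>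
  inferInstanceAs (Decidable (x ≠ y ∧ ((x.val < a ∧ y.val < a) ∨ (x.val = a ∧ y.val < b) ∨ (y.val = a ∧ x.val < b))))

lemma card_filter_fin (n : ℕ) (p : ℕ → Prop) [DecidablePred p] :
    (Finset.univ.filter (fun y : Fin n => p y.val)).card = ((Finset.range n).filter p).card := by
  apply Finset.card_bij (fun y _ => y.val)
  · intro y hy
    simp only [Finset.mem_filter, Finset.mem_univ, true_and] at hy ⊢
    exact ⟨Finset.mem_range.2 y.isLt, hy⟩
  · intro x hx y hy h; exact Fin.val_injective h
  · intro i hi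
    simp only [Finset.mem_filter, Finset.mem_range] at hi
    exact ⟨⟨i, hi.1⟩, by simpa using hi.2, rfl⟩

lemma QG_degree (n a b : ℕ) (han : a ≤ n) (hba : b < a) (hbn : b ≠ 0 → a < n) (v : Fin n) :
    (QG n a b).degree v =
      (if v.val < b then a else if v.val < a then a - 1 else if v.val = a then b else 0) := by
  classical
  rw [← SimpleGraph.card_neighborFinset_eq_degree, SimpleGraph.neighborFinset_eq_filter]
  have hAdj : ∀ y : Fin n, (QG n a b).Adj v y ↔
      (v.val ≠ y.val ∧ ((v.val < a ∧ y.val < a) ∨ (v.val = a ∧ y.val < b) ∨ (y.val = a ∧ v.val < b))) := by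
    intro y
    constructor
    · rintro ⟨h1, h2⟩; exact ⟨fun h => h1 (Fin.val_injective h), h2⟩
    · rintro ⟨h1, h2⟩; exact ⟨fun h => h1 (congrArg Fin.val h), h2⟩
  rw [Finset.filter_congr (fun y _ => by rw [hAdj y]),
    card_filter_fin n (fun i => v.val ≠ i ∧
      ((v.val < a ∧ i < a) ∨ (v.val = a ∧ i < b) ∨ (i = a ∧ v.val < b)))]
  rcases lt_or_ge v.val b with hv | hv
  · have hb0 : a < n := hbn (by omega)
    have : (Finset.range n).filter (fun i => v.val ≠ i ∧
        ((v.val < a ∧ i < a) ∨ (v.val = a ∧ i < b) ∨ (i = a ∧ v.val < b)))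
        = (Finset.range (a+1)).erase v.val := by
      ext i
      simp only [Finset.mem_filter, Finset.mem_range, Finset.mem_erase]
      omega
    rw [this, Finset.card_erase_of_mem (by simp; omega), Finset.card_range]
    simp only [if_pos hv]; omega
  · rcases lt_or_ge v.val a with hv2 | hv2
    · have : (Finset.range n).filter (fun i => v.val ≠ i ∧
          ((v.val < a ∧ i < a) ∨ (v.val = a ∧ i < b) ∨ (i = a ∧ v.val < b)))
          = (Finset.range a).erase v.val := by
        ext i
        simp only [Finset.mem_filter, Finset.mem_range, Finset.mem_erase]
        omega
      rw [this, Finset.card_erase_of_mem (by simp; omega), Finset.card_range]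
      simp only [if_neg (by omega : ¬ v.val < b), if_pos hv2]
    · rcases eq_or_ne v.val a with hv3 | hv3
      · have : (Finset.range n).filter (fun i => v.val ≠ i ∧
            ((v.val < a ∧ i < a) ∨ (v.val = a ∧ i < b) ∨ (i = a ∧ v.val < b)))
            = Finset.range b := by
          ext i
          simp only [Finset.mem_filter, Finset.mem_range]
          omega
        rw [this, Finset.card_range]
        simp only [if_neg (by omega : ¬ v.val < b), if_neg (by omega : ¬ v.val < a), if_pos hv3]
      · have : (Finset.range n).filter (fun i => v.val ≠ i ∧
            ((v.val < a ∧ i < a) ∨ (v.val = a ∧ i < b) ∨ (i = a ∧ v.val < b)))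
            = ∅ := by
          ext i
          simp only [Finset.mem_filter, Finset.mem_range, Finset.notMem_empty, iff_false]
          omega
        rw [this, Finset.card_empty]
        simp only [if_neg (by omega : ¬ v.val < b), if_neg (by omega : ¬ v.val < a), if_neg hv3]
lemma sum_w (n a b : ℕ) (han : a ≤ n) (hba : b < a) (hbn : b ≠ 0 → a < n) :
    ∑ i ∈ Finset.range n,
      (if i < b then a else if i < a then a - 1 else if i = a then b else 0)
      = a * (a - 1) + 2 * b := by
  have hb_le : b ≤ a := hba.le
  rw [Finset.range_eq_Ico, ← Finset.sum_Ico_consecutive _ (Nat.zero_le a) han,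
      ← Finset.sum_Ico_consecutive _ (Nat.zero_le b) hb_le]
  have h1 : ∑ i ∈ Finset.Ico 0 b,
      (if i < b then a else if i < a then a - 1 else if i = a then b else 0) = b * a := by
    rw [Finset.sum_congr rfl (fun i hi => by
      simp only [Finset.mem_Ico] at hi
      rw [if_pos hi.2]), Finset.sum_const, Nat.card_Ico, smul_eq_mul, Nat.sub_zero]
  have h2 : ∑ i ∈ Finset.Ico b a,
      (if i < b then a else if i < a then a - 1 else if i = a then b else 0) = (a - b) * (a - 1) := by
    rw [Finset.sum_congr rfl (fun i hi => by
      simp only [Finset.mem_Ico] at hi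
      rw [if_neg (by omega), if_pos hi.2]), Finset.sum_const, Nat.card_Ico, smul_eq_mul]
  have h3 : ∑ i ∈ Finset.Ico a n,
      (if i < b then a else if i < a then a - 1 else if i = a then b else 0) = if a < n then b else 0 := by
    rcases lt_or_ge a n with h | h
    · rw [if_pos h]
      rw [Finset.sum_eq_single_of_mem a (Finset.mem_Ico.2 ⟨le_refl a, h⟩)]
      · rw [if_neg (by omega), if_neg (by omega), if_pos rfl]
      · intro i hi hne
        simp only [Finset.mem_Ico] at hi
        rw [if_neg (by omega), if_neg (by omega), if_neg hne]
    · rw [if_neg (by omega), Finset.Ico_eq_empty (by omega), Finset.sum_empty]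
  rw [h1, h2, h3]
  rcases lt_or_ge a n with h | h
  · rw [if_pos h]
    zify [hb_le, (by omega : 1 ≤ a)]
    ring
  · have hb0 : b = 0 := by by_contra hb; exact absurd (hbn hb) (by omega)
    subst hb0
    rw [if_neg (by omega)]
    simp [Nat.sub_zero]
lemma QG_edge_card (n a b : ℕ) (han : a ≤ n) (hba : b < a) (hbn : b ≠ 0 → a < n) :
    2 * Nat.card (QG n a b).edgeSet = a * (a - 1) + 2 * b := by
  have h1 : Nat.card (QG n a b).edgeSet = (QG n a b).edgeFinset.card := by
    rw [Nat.card_coe_set_eq, Set.ncard_eq_toFinset_card']; congr 1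
  rw [h1, ← SimpleGraph.sum_degrees_eq_twice_card_edges,
    Finset.sum_congr rfl (fun v _ => QG_degree n a b han hba hbn v),
    Fin.sum_univ_eq_sum_range
      (fun i => if i < b then a else if i < a then a - 1 else if i = a then b else 0) n,
    sum_w n a b han hba hbn]

lemma two_mul_half (a : ℕ) : 2 * (a * (a - 1) / 2) = a * (a - 1) := by
  rcases a with _ | a'
  · simp
  · have hev : Even ((a' + 1) * a') := (mul_comm a' (a'+1)) ▸ Nat.even_mul_succ_self a'
    simp only [Nat.succ_sub_one]
    exact Nat.mul_div_cancel' hev.two_dvd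

lemma QG_paths (n a b : ℕ) (han : a ≤ n) :
    Nat.descFactorial a 5 ≤ Nat.card {f : Fin 5 → Fin n //
      Function.Injective f ∧ ∀ i : Fin 4, (QG n a b).Adj (f i.castSucc) (f i.succ)} := by
  have key : Nat.card (Fin 5 ↪ Fin a) ≤ Nat.card {f : Fin 5 → Fin n //
      Function.Injective f ∧ ∀ i : Fin 4, (QG n a b).Adj (f i.castSucc) (f i.succ)} := by
    apply Nat.card_le_card_of_injective
      (f := fun g => ⟨fun i => Fin.castLE han (g i),
        (Fin.castLE_injective han).comp g.injective,
        fun i => ⟨fun h => (Fin.castSucc_lt_succ : i.castSucc < i.succ).ne (g.injective ((Fin.castLE_injective han) h)),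
          Or.inl ⟨(g i.castSucc).isLt, (g i.succ).isLt⟩⟩⟩)
    intro g₁ g₂ h
    ext i
    have h2 := congrFun (congrArg Subtype.val h) i
    exact congrArg Fin.val ((Fin.castLE_injective han) h2)
  rwa [Nat.card_eq_fintype_card, Fintype.card_embedding_eq, Fintype.card_fin, Fintype.card_fin] at key

lemma descFactorial_lb (c : ℕ) : (c + 1) ^ 5 + 1 ≤ Nat.descFactorial (c + 5) 5 := by
  have h : Nat.descFactorial (c + 5) 5 = (c+1)*((c+2)*((c+3)*((c+4)*(c+5)))) := by
    simp [Nat.descFactorial]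
  rw [h]
  nlinarith [sq_nonneg c, c.zero_le]

/-- The number of 4-edge paths in `G` (subgraphs isomorphic to the path with 4 edges):
each such path corresponds to exactly two injective tuples (its two directions). -/
noncomputable def pathCount4 {V : Type*} (G : SimpleGraph V) : ℕ :=
  Nat.card {f : Fin 5 → V //
    Function.Injective f ∧ ∀ i : Fin 4, G.Adj (f i.castSucc) (f i.succ)} / 2

theorem exists_graph_many_paths (n e : ℕ) (hn : 0 < n) (he : 13 ≤ e)
    (hle : 2 * e ≤ n * (n - 1)) :
    ∃ G : SimpleGraph (Fin n), Nat.card G.edgeSet = e ∧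
      1 / 2 * (Real.sqrt (2 * (e : ℝ)) - 5) ^ 5 ≤ (pathCount4 G : ℝ) := by
  classical
  have hn6 : 6 ≤ n := by
    by_contra h
    push_neg at h
    interval_cases n <;> omega
  have hP5 : 5 * (5 - 1) ≤ 2 * e := by omega
  set a : ℕ := Nat.findGreatest (fun k => k * (k - 1) ≤ 2 * e) n with ha
  have ha5 : 5 ≤ a := Nat.le_findGreatest (by omega) hP5
  have han : a ≤ n := Nat.findGreatest_le n
  have haP : a * (a - 1) ≤ 2 * e :=
    Nat.findGreatest_spec (P := fun k => k * (k - 1) ≤ 2 * e) (by omega : 5 ≤ n) hP5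
  have hm := two_mul_half a
  have hkey : (a + 1) * a = a * (a - 1) + 2 * a := by
    obtain ⟨a', ha'⟩ : ∃ a', a = a' + 1 := ⟨a - 1, by omega⟩
    rw [ha']
    simp only [Nat.add_sub_cancel]
    ring
  -- maximality
  have hmax : a = n ∨ 2 * e < (a + 1) * a := by
    rcases eq_or_lt_of_le han with h | h
    · exact Or.inl h
    · right
      have := Nat.findGreatest_is_greatest (P := fun k => k * (k - 1) ≤ 2 * e)
        (n := n) (k := a + 1) (by omega) (by omega)
      simp only [Nat.add_sub_cancel] at this
      omega
  set b : ℕ := e - a * (a - 1) / 2 with hb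
  have hban : b < a ∧ (b ≠ 0 → a < n) := by
    rcases hmax with h | h
    · have h2 : 2 * e ≤ a * (a - 1) := by
        rw [h]; exact hle
      constructor
      · omega
      · intro hb0; omega
    · constructor
      · omega
      · intro hb0
        rcases eq_or_lt_of_le han with h2 | h2
        · exfalso
          have h3 : 2 * e ≤ a * (a - 1) := by rw [h2]; exact hle
          omega
        · exact h2
  obtain ⟨hba, hbn⟩ := hban
  have hE : e = a * (a - 1) / 2 + b := by omega
  clear_value a b
  refine ⟨QG n a b, ?_, ?_⟩
  · have := QG_edge_card n a b han hba hbn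
    omega
  · -- path count
    obtain ⟨N, hN, hp⟩ : ∃ N, Nat.descFactorial a 5 ≤ N ∧
        pathCount4 (QG n a b) = N / 2 := ⟨_, QG_paths n a b han, rfl⟩
    have hdf : (a - 4) ^ 5 + 1 ≤ Nat.descFactorial a 5 := by
      obtain ⟨c, hc⟩ : ∃ c, a = c + 5 := ⟨a - 5, by omega⟩
      rw [hc]
      have : c + 5 - 4 = c + 1 := by omega
      rw [this]
      exact descFactorial_lb c
    have hnat : (a - 4) ^ 5 ≤ 2 * pathCount4 (QG n a b) := by omega
    -- real part
    have hs5 : (5 : ℝ) ≤ Real.sqrt (2 * e) := by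
      rw [show (5:ℝ) = Real.sqrt 25 by
        rw [show (25:ℝ) = 5^2 by norm_num, Real.sqrt_sq (by norm_num)]]
      apply Real.sqrt_le_sqrt
      have : (26:ℝ) ≤ 2 * e := by
        have : (13:ℝ) ≤ e := by exact_mod_cast he
        linarith
      linarith
    have hsa : Real.sqrt (2 * e) ≤ (a : ℝ) + 1 := by
      rw [show ((a:ℝ) + 1) = Real.sqrt (((a:ℝ)+1)^2) by
        rw [Real.sqrt_sq (by positivity)]]
      apply Real.sqrt_le_sqrt
      have h2 : 2 * e ≤ (a + 1) * (a + 1) := by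
        rcases hmax with h | h
        · rw [h]
          exact hle.trans (Nat.mul_le_mul (by omega) (by omega))
        · exact h.le.trans (Nat.mul_le_mul_left _ (by omega))
      have := (Nat.cast_le (α := ℝ)).2 h2
      push_cast at this
      nlinarith
    have hcast : ((a - 4 : ℕ) : ℝ) = (a : ℝ) - 4 := by
      have : (4:ℕ) ≤ a := by omega
      push_cast [this]
      ring
    have hfin : ((a - 4 : ℕ) : ℝ) ^ 5 ≤ 2 * (pathCount4 (QG n a b) : ℝ) := by
      exact_mod_cast hnat
    have hpow : (Real.sqrt (2 * e) - 5) ^ 5 ≤ ((a - 4 : ℕ) : ℝ) ^ 5 := by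
      apply pow_le_pow_left₀ (by linarith)
      rw [hcast]
      linarith
    linarith
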